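/- arXiv:2305.17365 — 2 statements merged into one kernel-verified Lean document; each statement's English description precedes it below -/
import Mathlib

section
/- Let d ≥ 3, let v_1, …, v_d be distinct unit vectors in ℝ^d and b_1, …, b_d ∈ ℝ satisfying (R1), (R2) and (R3). Let A = {x ∈ ℝ^d : x·v_j ≤ b_j for j = 1,…,d}, F_j = {x ∈ A : x·v_j = b_j}, and S_j := {y + s v_j : y ∈ relint(F_j), s > 0}. Then S_j ∩ S_k = ∅ for all j ≠ k. -/
open MeasureTheory Matrix Real

/-- matrix whose columns are the vectors `u 0, …, u (r-1)` -/
noncomputable def colMat {d r : ℕ} (u : Fin r → Fin d → ℝ) : Matrix (Fin d) (Fin r) ℝ :=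
  Matrix.of fun i m => u m i

/-- matrix whose columns are the vectors `(u m, c m) ∈ ℝ^{d+1}` -/
noncomputable def augMat {d r : ℕ} (u : Fin r → Fin d → ℝ) (c : Fin r → ℝ) :
    Matrix (Fin d ⊕ Unit) (Fin r) ℝ :=
  Matrix.of fun i m => Sum.elim (fun i' => u m i') (fun _ => c m) i

/-- under (R1), (R2), (R3), the outer regions
`S_j = {y + s v_j : y ∈ relint F_j, s > 0}` are pairwise disjoint. -/
theorem stmt14 :
    ∀ d : ℕ, 3 ≤ d →
    ∀ v : Fin d → (Fin d → ℝ), Function.Injective v → (∀ j, ∑ i, v j i ^ 2 = 1) →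
    ∀ b : Fin d → ℝ,
      -- (R1)
      (∀ j k : Fin d, j < k →
        (colMat ![v j, v k]).rank < 2 →
        (colMat ![v j, v k]).rank < (augMat ![v j, v k] ![b j, b k]).rank) →
      -- (R2)
      (∀ j k l : Fin d, j < k → k < l →
        (colMat ![v j, v k, v l]).rank < 3 →
        (colMat ![v j, v k, v l]).rank < (augMat ![v j, v k, v l] ![b j, b k, b l]).rank) →
      -- (R3)
      (∀ j k l s : Fin d, j < k → k < l → l < s →
        (colMat ![v j, v k, v l, v s]).rank < 4 →
        (colMat ![v j, v k, v l, v s]).rank <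
          (augMat ![v j, v k, v l, v s] ![b j, b k, b l, b s]).rank) →
      letI A : Set (Fin d → ℝ) := {x | ∀ m, x ⬝ᵥ v m ≤ b m}
      letI F : Fin d → Set (Fin d → ℝ) := fun j => {x | x ∈ A ∧ x ⬝ᵥ v j = b j}
      letI S : Fin d → Set (Fin d → ℝ) := fun j =>
        {x | ∃ y ∈ intrinsicInterior ℝ (F j), ∃ s : ℝ, 0 < s ∧ x = y + s • v j}
      ∀ j k : Fin d, j ≠ k → S j ∩ S k = ∅ := by
  intro d hd v hinj hunit b _ _ _ j k hjk
  rw [Set.eq_empty_iff_forall_notMem]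
  rintro x hx
  simp only [Set.mem_inter_iff, Set.mem_setOf_eq] at hx
  obtain ⟨⟨y, hy, s, hs, hxy⟩, ⟨z, hz, t, ht, hxz⟩⟩ := hx
  obtain ⟨hyA, hyj⟩ := intrinsicInterior_subset hy
  obtain ⟨hzA, hzk⟩ := intrinsicInterior_subset hz
  have heq : y + s • v j = z + t • v k := hxy ▸ hxz
  set c : ℝ := v j ⬝ᵥ v k with hc
  have hsq : ∀ m, v m ⬝ᵥ v m = 1 := by
    intro m
    have := hunit m
    simpa [dotProduct, pow_two] using this
  -- dot heq with v k
  have h1 : y ⬝ᵥ v k + s * c = z ⬝ᵥ v k + t * 1 := by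
    have := congrArg (fun w => w ⬝ᵥ v k) heq
    simpa [add_dotProduct, smul_dotProduct, smul_eq_mul, hsq k] using this
  -- dot heq with v j
  have h2 : y ⬝ᵥ v j + s * 1 = z ⬝ᵥ v j + t * c := by
    have := congrArg (fun w => w ⬝ᵥ v j) heq
    have hcomm : v k ⬝ᵥ v j = c := by rw [hc, dotProduct_comm]
    simpa [add_dotProduct, smul_dotProduct, smul_eq_mul, hsq j, hcomm] using this
  have hyk : y ⬝ᵥ v k ≤ b k := hyA k
  have hzj : z ⬝ᵥ v j ≤ b j := hzA j
  -- s * c ≥ t and t * c ≥ s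
  have hsc : t ≤ s * c := by nlinarith [hzk]
  have htc : s ≤ t * c := by nlinarith [hyj]
  have hcpos : 0 < c := by nlinarith
  have hc1 : 1 ≤ c := by nlinarith
  -- now v j = v k, contradiction
  have hsum : ∑ i, (v j i - v k i) ^ 2 = 2 - 2 * c := by
    have h1 := hunit j
    have h2 := hunit k
    have h3 : c = ∑ i, v j i * v k i := by rw [hc, dotProduct]
    calc ∑ i, (v j i - v k i) ^ 2
        = ∑ i, (v j i ^ 2 + v k i ^ 2 - 2 * (v j i * v k i)) := by
          apply Finset.sum_congr rfl; intro i _; ring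
      _ = (∑ i, v j i ^ 2) + (∑ i, v k i ^ 2) - 2 * ∑ i, v j i * v k i := by
          rw [Finset.sum_sub_distrib, Finset.sum_add_distrib, Finset.mul_sum]
      _ = 2 - 2 * c := by rw [h1, h2, h3]; ring
  have hsum0 : ∑ i, (v j i - v k i) ^ 2 = 0 := by
    have hnn : 0 ≤ ∑ i, (v j i - v k i) ^ 2 :=
      Finset.sum_nonneg fun i _ => sq_nonneg _
    linarith
  have hvjk : v j = v k := by
    funext i
    have := (Finset.sum_eq_zero_iff_of_nonneg (fun i _ => sq_nonneg (v j i - v k i))).mp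
      hsum0 i (Finset.mem_univ i)
    have : v j i - v k i = 0 := by nlinarith [this]
    linarith
  exact hjk (hinj hvjk)
end

section
/- Let d ≥ 3, let v_1, …, v_d be distinct unit vectors in ℝ^d and b_1, …, b_d ∈ ℝ satisfying (R1), (R2) and (R3). Let A = {x ∈ ℝ^d : x·v_j ≤ b_j for j = 1,…,d}, F_j = {x ∈ A : x·v_j = b_j}, F_{jk} = F_j ∩ F_k, and for 1 ≤ j < k ≤ d let S_{jk} := {y + s v_j + t v_k : y ∈ relint(F_{jk}), s > 0, t > 0}. Then S_{jk} ∩ S_{j'k'} = ∅ whenever {j, k} ≠ {j', k'} as two-element index sets. -/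
open MeasureTheory Matrix Real

lemma li_core {d r : ℕ} (u : Fin r → Fin d → ℝ) (c : Fin r → ℝ) (y : Fin d → ℝ)
    (hact : ∀ m, y ⬝ᵥ u m = c m)
    (hR : (colMat u).rank < r → (colMat u).rank < (augMat u c).rank) :
    LinearIndependent ℝ u := by
  classical
  have hfac : augMat u c =
      (Matrix.of (Sum.elim (fun i i' => if i = i' then (1:ℝ) else 0) (fun _ i' => y i'))) *
        colMat u := by
    ext i m
    cases i with
    | inl i => simp [augMat, colMat, Matrix.mul_apply]
    | inr _ =>
      simp only [augMat, colMat, Matrix.mul_apply, Matrix.of_apply, Sum.elim_inr]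
      exact (hact m).symm
  have hle : (augMat u c).rank ≤ (colMat u).rank := by
    rw [hfac]; exact Matrix.rank_mul_le_right _ _
  by_contra hnLI
  have hrank : (colMat u).rank = (Set.range u).finrank ℝ := by
    rw [Matrix.rank_eq_finrank_span_cols]
    rfl
  have hne : (colMat u).rank ≠ r := by
    intro h
    exact hnLI (linearIndependent_iff_card_eq_finrank_span.mpr (by rw [← hrank, h, Fintype.card_fin]))
  have hlt : (colMat u).rank < r :=
    lt_of_le_of_ne (le_trans (Matrix.rank_le_card_width _) (le_of_eq (Fintype.card_fin r))) hne
  exact absurd (hR hlt) (not_lt.mpr hle)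

lemma li3' {d : ℕ} (v : Fin d → Fin d → ℝ) (b : Fin d → ℝ) (y : Fin d → ℝ)
    (hR2 : ∀ j k l : Fin d, j < k → k < l →
      (colMat ![v j, v k, v l]).rank < 3 →
      (colMat ![v j, v k, v l]).rank < (augMat ![v j, v k, v l] ![b j, b k, b l]).rank)
    (a : Fin 3 → Fin d) (hmono : StrictMono a)
    (hact : ∀ m, y ⬝ᵥ v (a m) = b (a m)) :
    LinearIndependent ℝ (v ∘ a) := by
  have h1 : LinearIndependent ℝ ![v (a 0), v (a 1), v (a 2)] :=
    li_core _ ![b (a 0), b (a 1), b (a 2)] y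
      (fun m => by fin_cases m <;> simpa using hact _)
      (hR2 _ _ _ (hmono (by decide)) (hmono (by decide)))
  have heq : v ∘ a = ![v (a 0), v (a 1), v (a 2)] := by
    funext m; fin_cases m <;> simp
  rw [heq]; exact h1

lemma li4' {d : ℕ} (v : Fin d → Fin d → ℝ) (b : Fin d → ℝ) (y : Fin d → ℝ)
    (hR3 : ∀ j k l s : Fin d, j < k → k < l → l < s →
      (colMat ![v j, v k, v l, v s]).rank < 4 →
      (colMat ![v j, v k, v l, v s]).rank <
        (augMat ![v j, v k, v l, v s] ![b j, b k, b l, b s]).rank)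
    (a : Fin 4 → Fin d) (hmono : StrictMono a)
    (hact : ∀ m, y ⬝ᵥ v (a m) = b (a m)) :
    LinearIndependent ℝ (v ∘ a) := by
  have h1 : LinearIndependent ℝ ![v (a 0), v (a 1), v (a 2), v (a 3)] :=
    li_core _ ![b (a 0), b (a 1), b (a 2), b (a 3)] y
      (fun m => by fin_cases m <;> simpa using hact _)
      (hR3 _ _ _ _ (hmono (by decide)) (hmono (by decide)) (hmono (by decide)))
  have heq : v ∘ a = ![v (a 0), v (a 1), v (a 2), v (a 3)] := by
    funext m; fin_cases m <;> simp
  rw [heq]; exact h1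

lemma li_subtype_of_fin {d r : ℕ} (v : Fin d → Fin d → ℝ) (T : Finset (Fin d)) (h : T.card = r)
    (hLI : LinearIndependent ℝ (v ∘ fun m : Fin r => ((T.orderIsoOfFin h m : T) : Fin d))) :
    LinearIndependent ℝ (fun i : T => v (i : Fin d)) := by
  rw [← linearIndependent_equiv (T.orderIsoOfFin h).toEquiv]
  exact hLI

lemma coeff_zero {d : ℕ} (v : Fin d → Fin d → ℝ) (T : Finset (Fin d))
    (hLI : LinearIndependent ℝ (fun i : T => v (i : Fin d))) (g : Fin d → ℝ)
    (hsum : ∑ i ∈ T, g i • v i = 0) : ∀ i ∈ T, g i = 0 := by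
  intro i hi
  refine Fintype.linearIndependent_iff.mp hLI (fun i : T => g i) ?_ ⟨i, hi⟩
  rw [← Finset.sum_coe_sort T (fun i => g i • v i)] at hsum
  exact hsum

/-- under (R1), (R2), (R3), the outer regions
`S_{jk} = {y + s v_j + t v_k : y ∈ relint F_{jk}, s, t > 0}` (for `j < k`) are
pairwise disjoint. -/
theorem stmt15 :
    ∀ d : ℕ, 3 ≤ d →
    ∀ v : Fin d → (Fin d → ℝ), Function.Injective v → (∀ j, ∑ i, v j i ^ 2 = 1) →
    ∀ b : Fin d → ℝ,
      -- (R1)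
      (∀ j k : Fin d, j < k →
        (colMat ![v j, v k]).rank < 2 →
        (colMat ![v j, v k]).rank < (augMat ![v j, v k] ![b j, b k]).rank) →
      -- (R2)
      (∀ j k l : Fin d, j < k → k < l →
        (colMat ![v j, v k, v l]).rank < 3 →
        (colMat ![v j, v k, v l]).rank < (augMat ![v j, v k, v l] ![b j, b k, b l]).rank) →
      -- (R3)
      (∀ j k l s : Fin d, j < k → k < l → l < s →
        (colMat ![v j, v k, v l, v s]).rank < 4 →
        (colMat ![v j, v k, v l, v s]).rank <
          (augMat ![v j, v k, v l, v s] ![b j, b k, b l, b s]).rank) →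
      letI A : Set (Fin d → ℝ) := {x | ∀ m, x ⬝ᵥ v m ≤ b m}
      letI F : Fin d → Set (Fin d → ℝ) := fun j => {x | x ∈ A ∧ x ⬝ᵥ v j = b j}
      letI S : Fin d → Fin d → Set (Fin d → ℝ) := fun j k =>
        {x | ∃ y ∈ intrinsicInterior ℝ (F j ∩ F k), ∃ s t : ℝ, 0 < s ∧ 0 < t ∧
          x = y + s • v j + t • v k}
      ∀ j k j' k' : Fin d, j < k → j' < k' →
        ({j, k} : Finset (Fin d)) ≠ ({j', k'} : Finset (Fin d)) →
        S j k ∩ S j' k' = ∅ := by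
  intro d hd v hinj hunit b hR1 hR2 hR3
  intro j k j' k' hjk hj'k' hne
  classical
  apply Set.eq_empty_iff_forall_notMem.mpr
  rintro x ⟨hx1, hx2⟩
  obtain ⟨y, hy, s, t, hs, ht, hxeq⟩ := hx1
  obtain ⟨y', hy', s', t', hs', ht', hxeq'⟩ := hx2
  obtain ⟨⟨hyA, hyj⟩, -, hyk⟩ := intrinsicInterior_subset hy
  obtain ⟨⟨hy'A, hy'j⟩, -, hy'k⟩ := intrinsicInterior_subset hy'
  have hyA' : ∀ m, y ⬝ᵥ v m ≤ b m := hyA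
  have hy'A' : ∀ m, y' ⬝ᵥ v m ≤ b m := hy'A
  -- pointwise difference
  have key : ∀ i, y i - y' i = s' * v j' i + t' * v k' i - s * v j i - t * v k i := by
    intro i
    have h1 := congrFun hxeq i
    have h2 := congrFun hxeq' i
    simp only [Pi.add_apply, Pi.smul_apply, smul_eq_mul] at h1 h2
    linarith
  have hqj : 0 ≤ (y - y') ⬝ᵥ v j := by
    rw [sub_dotProduct, hyj]; linarith [hy'A' j]
  have hqk : 0 ≤ (y - y') ⬝ᵥ v k := by
    rw [sub_dotProduct, hyk]; linarith [hy'A' k]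
  have hqj' : (y - y') ⬝ᵥ v j' ≤ 0 := by
    rw [sub_dotProduct, hy'j]; linarith [hyA' j']
  have hqk' : (y - y') ⬝ᵥ v k' ≤ 0 := by
    rw [sub_dotProduct, hy'k]; linarith [hyA' k']
  have hdot : (y - y') ⬝ᵥ (y - y') =
      s' * ((y - y') ⬝ᵥ v j') + t' * ((y - y') ⬝ᵥ v k')
        - s * ((y - y') ⬝ᵥ v j) - t * ((y - y') ⬝ᵥ v k) := by
    simp only [dotProduct, Pi.sub_apply, Finset.mul_sum]
    rw [← Finset.sum_add_distrib, ← Finset.sum_sub_distrib, ← Finset.sum_sub_distrib]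
    refine Finset.sum_congr rfl fun i _ => ?_
    rw [key i]; ring
  have hself : (y - y') ⬝ᵥ (y - y') ≤ 0 := by nlinarith
  have hself0 : (y - y') ⬝ᵥ (y - y') = 0 := by
    refine le_antisymm hself (Finset.sum_nonneg fun i _ => ?_)
    exact mul_self_nonneg _
  have hyy' : y = y' := sub_eq_zero.mp (dotProduct_self_eq_zero.mp hself0)
  -- all four constraints active at y
  have hyj'2 : y ⬝ᵥ v j' = b j' := by rw [hyy']; exact hy'j
  have hyk'2 : y ⬝ᵥ v k' = b k' := by rw [hyy']; exact hy'k
  have h0 : ∀ i, s * v j i + t * v k i - s' * v j' i - t' * v k' i = 0 := by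
    intro i
    have := key i
    rw [hyy', sub_self] at this
    linarith
  set T : Finset (Fin d) := {j, k, j', k'} with hT
  set g : Fin d → ℝ := fun i =>
    (if i = j then s else 0) + (if i = k then t else 0)
      - (if i = j' then s' else 0) - (if i = k' then t' else 0) with hg
  have hactT : ∀ i ∈ T, y ⬝ᵥ v i = b i := by
    intro i hi
    simp only [hT, Finset.mem_insert, Finset.mem_singleton] at hi
    rcases hi with rfl | rfl | rfl | rfl <;> assumption
  have hjkne : j ≠ k := ne_of_lt hjk
  have hj'k'ne : j' ≠ k' := ne_of_lt hj'k'
  -- element in {j,k} \ {j',k'}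
  have hEx : ∃ i0, i0 ∈ ({j, k} : Finset (Fin d)) ∧ i0 ∉ ({j', k'} : Finset (Fin d)) := by
    by_contra h
    push_neg at h
    exact hne (Finset.eq_of_subset_of_card_le (fun i hi => h i hi)
      (by rw [Finset.card_pair hjkne, Finset.card_pair hj'k'ne]))
  obtain ⟨i0, hi0in, hi0out⟩ := hEx
  have hEx' : ∃ i1, i1 ∈ ({j', k'} : Finset (Fin d)) ∧ i1 ∉ ({j, k} : Finset (Fin d)) := by
    by_contra h
    push_neg at h
    exact hne (Finset.eq_of_subset_of_card_le (fun i hi => h i hi)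
      (by rw [Finset.card_pair hjkne, Finset.card_pair hj'k'ne])).symm
  obtain ⟨i1, hi1in, hi1out⟩ := hEx'
  have hi1j : i1 ≠ j := by rintro rfl; exact hi1out (by simp)
  have hi1k : i1 ≠ k := by rintro rfl; exact hi1out (by simp)
  -- cardinality of T is 3 or 4
  have hcard4 : T.card ≤ 4 := by
    have c1 := Finset.card_insert_le j ({k, j', k'} : Finset (Fin d))
    have c2 := Finset.card_insert_le k ({j', k'} : Finset (Fin d))
    have c3 := Finset.card_insert_le j' ({k'} : Finset (Fin d))
    have c4 : ({k'} : Finset (Fin d)).card = 1 := Finset.card_singleton _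
    rw [hT]
    omega
  have hcard3 : 3 ≤ T.card := by
    have hsub : ({i1, j, k} : Finset (Fin d)) ⊆ T := by
      intro a ha
      simp only [Finset.mem_insert, Finset.mem_singleton] at ha
      simp only [hT, Finset.mem_insert, Finset.mem_singleton]
      rcases ha with rfl | rfl | rfl
      · simp only [Finset.mem_insert, Finset.mem_singleton] at hi1in
        tauto
      · tauto
      · tauto
    have hc : ({i1, j, k} : Finset (Fin d)).card = 3 := by
      rw [Finset.card_insert_of_notMem (by simp [hi1j, hi1k]), Finset.card_pair hjkne]
    have := Finset.card_le_card hsub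
    omega
  -- linear independence of the active normals
  have hLIT : LinearIndependent ℝ (fun i : T => v (i : Fin d)) := by
    have hcases : T.card = 3 ∨ T.card = 4 := by omega
    rcases hcases with h | h
    · exact li_subtype_of_fin v T h (li3' v b y hR2 _
        (fun m m' hmm' => Subtype.coe_lt_coe.mpr ((T.orderIsoOfFin h).strictMono hmm'))
        (fun m => hactT _ (T.orderIsoOfFin h m).2))
    · exact li_subtype_of_fin v T h (li4' v b y hR3 _
        (fun m m' hmm' => Subtype.coe_lt_coe.mpr ((T.orderIsoOfFin h).strictMono hmm'))
        (fun m => hactT _ (T.orderIsoOfFin h m).2))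
  -- the vanishing linear combination with support in T
  have hgsum : ∑ i ∈ T, g i • v i = 0 := by
    have huniv : ∑ i ∈ Finset.univ, g i • v i = ∑ i ∈ T, g i • v i := by
      refine (Finset.sum_subset (Finset.subset_univ T) ?_).symm
      intro i _ hiT
      simp only [hT, Finset.mem_insert, Finset.mem_singleton] at hiT
      push_neg at hiT
      obtain ⟨n1, n2, n3, n4⟩ := hiT
      simp [hg, n1, n2, n3, n4]
    rw [← huniv]
    funext i'
    simp only [Finset.sum_apply, Pi.smul_apply, smul_eq_mul, Pi.zero_apply]
    have hexp : ∑ i, g i * v i i'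
        = s * v j i' + t * v k i' - s' * v j' i' - t' * v k' i' := by
      simp only [hg, add_mul, sub_mul, zero_mul, ite_mul, Finset.sum_add_distrib,
        Finset.sum_sub_distrib, Finset.sum_ite_eq', Finset.mem_univ, if_true]
    rw [hexp]
    exact h0 i'
  have hgz := coeff_zero v T hLIT g hgsum
  -- contradiction: g i0 ≠ 0
  have hi0T : i0 ∈ T := by
    simp only [Finset.mem_insert, Finset.mem_singleton] at hi0in
    simp only [hT, Finset.mem_insert, Finset.mem_singleton]
    tauto
  have hi0j' : i0 ≠ j' := by rintro rfl; exact hi0out (by simp)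
  have hi0k' : i0 ≠ k' := by rintro rfl; exact hi0out (by simp)
  have := hgz i0 hi0T
  simp only [Finset.mem_insert, Finset.mem_singleton] at hi0in
  rcases hi0in with rfl | rfl <;>
    simp [hg, hjkne, Ne.symm hjkne, hi0j', hi0k'] at this <;> linarith
end
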